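/- Under the same abstract hypotheses (B countable, c ≪' a ⟹ c ⪯ a; c ⪯ d ≪' a ⪯ b ⟹ c ≪' b; interpolation c ≪' a ⟹ ∃ d, c ≪' d ≪' a; and a ⪯ b ⟺ ∀ c ∈ B, c ≪' a ⟹ c ≪' b), the topology on the quotient X/≈ (where ≈ = ⪯ ∩ ⪰) generated by subbasic open sets ⇈c = {a : c ≪' a} and their 'complements' X ∖ ↑c = {a : ¬(c ⪯ a)} for c ∈ B, is second countable and Hausdorff. -/
import Mathlib


/-- The Lawson-style topology on the quotient of `X` by the equivalence induced
by the preorder, generated by the subbasic sets `⇈c` and the complements of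
`↑c` for `c` in the countable basis `B`, is second countable and Hausdorff. -/
theorem stmt13 {X : Type*} [Preorder X] (B : Set X) (hB : B.Countable)
    (lll : X → X → Prop)
    (h1 : ∀ c a, c ∈ B → lll c a → c ≤ a)
    (h2 : ∀ c d a b, c ∈ B → d ∈ B → c ≤ d → lll d a → a ≤ b → lll c b)
    (h3 : ∀ c a, c ∈ B → lll c a → ∃ d ∈ B, lll c d ∧ lll d a)
    (h4 : ∀ a b : X, a ≤ b ↔ ∀ c ∈ B, lll c a → lll c b) :
    let Q := Antisymmetrization X (· ≤ ·)
    let mk : X → Q := toAntisymmetrization (· ≤ ·)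
    let dup : X → Set Q := fun c => {q | ∃ a : X, mk a = q ∧ lll c a}
    let up : X → Set Q := fun c => {q | ∃ a : X, mk a = q ∧ c ≤ a}
    let T : TopologicalSpace Q :=
      TopologicalSpace.generateFrom ((dup '' B) ∪ ((fun c => (up c)ᶜ) '' B))
    @SecondCountableTopology Q T ∧ @T2Space Q T := by
  intro Q mk dup up T
  constructor
  · exact @SecondCountableTopology.mk Q T
      ⟨_, (hB.image _).union (hB.image _), rfl⟩
  · -- Hausdorff
    refine @T2Space.mk Q T ?_
    -- key separation lemma : if ¬ a ≤ b then separated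
    have key : ∀ a b : X, ¬ a ≤ b →
        ∃ u v : Set Q, T.IsOpen u ∧ T.IsOpen v ∧ mk a ∈ u ∧ mk b ∈ v ∧ Disjoint u v := by
      intro a b hab
      rw [h4] at hab
      push_neg at hab
      obtain ⟨c, hcB, hca, hcb⟩ := hab
      obtain ⟨d, hdB, hcd, hda⟩ := h3 c a hcB hca
      refine ⟨dup d, (up d)ᶜ, ?_, ?_, ⟨a, rfl, hda⟩, ?_, ?_⟩
      · exact TopologicalSpace.GenerateOpen.basic _ (Or.inl ⟨d, hdB, rfl⟩)
      · exact TopologicalSpace.GenerateOpen.basic _ (Or.inr ⟨d, hdB, rfl⟩)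
      · -- mk b ∈ (up d)ᶜ
        rintro ⟨x, hx, hdx⟩
        -- x ≈ b, d ≤ x, lll c d ⟹ lll c b, contradiction
        have hxb : x ≤ b := (Quotient.exact hx).1
        exact hcb (h2 c c d b hcB hcB le_rfl hcd (hdx.trans hxb))
      · -- disjoint
        rw [Set.disjoint_right]
        rintro q hq ⟨x, hx, hdx⟩
        exact hq ⟨x, hx, h1 d x hdB hdx⟩
    intro p q hpq
    induction p using Quotient.inductionOn with | _ a => ?_
    induction q using Quotient.inductionOn with | _ b => ?_
    have : ¬ a ≤ b ∨ ¬ b ≤ a := by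
      by_contra h
      push_neg at h
      exact hpq (Quotient.sound ⟨h.1, h.2⟩)
    rcases this with h | h
    · exact key a b h
    · obtain ⟨u, v, hu, hv, hb, ha, huv⟩ := key b a h
      exact ⟨v, u, hv, hu, ha, hb, huv.symm⟩
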